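/- Let N ≥ 1 be an integer, δ > 0, and let α, β be real numbers with α > N and 0 < β < N. Then there exists a constant C > 0, depending only on N, α, β, δ, such that for all x, y ∈ ℝ^N and all t > 0 with |y−x|² + t² ≥ δ², one has ∫_{ℝ^N} (t+|z|)^{−α} |y−z−x|^{−β} dz ≤ C ( (1+|y−x|)^{−β} t^{−(α−N)} + (1+|y−x|)^{−(α+β−N)} ). -/

import Mathlib

open MeasureTheory

open Metric Set Module in
private lemma aux_whole (N : ℕ) (α t : ℝ) (ht : 0 < t) :
    ∫⁻ z : EuclideanSpace ℝ (Fin N), ENNReal.ofReal ((t + ‖z‖) ^ (-α)) =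
      ENNReal.ofReal (t ^ ((N : ℝ) - α)) *
        ∫⁻ u : EuclideanSpace ℝ (Fin N), ENNReal.ofReal ((1 + ‖u‖) ^ (-α)) := by
  have hg : Measurable fun z : EuclideanSpace ℝ (Fin N) =>
      ENNReal.ofReal ((t + ‖z‖) ^ (-α)) := by fun_prop
  have hmap := Measure.map_addHaar_smul (volume : Measure (EuclideanSpace ℝ (Fin N))) ht.ne'
  have key : ∫⁻ u : EuclideanSpace ℝ (Fin N),
      ENNReal.ofReal (t ^ (-α)) * ENNReal.ofReal ((1 + ‖u‖) ^ (-α)) =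
      ENNReal.ofReal |((t ^ N : ℝ))⁻¹| *
        ∫⁻ z : EuclideanSpace ℝ (Fin N), ENNReal.ofReal ((t + ‖z‖) ^ (-α)) := by
    calc ∫⁻ u : EuclideanSpace ℝ (Fin N),
          ENNReal.ofReal (t ^ (-α)) * ENNReal.ofReal ((1 + ‖u‖) ^ (-α))
        = ∫⁻ u : EuclideanSpace ℝ (Fin N), ENNReal.ofReal ((t + ‖t • u‖) ^ (-α)) := by
          refine lintegral_congr fun u => ?_
          rw [norm_smul, Real.norm_eq_abs, abs_of_pos ht,
            show t + t * ‖u‖ = t * (1 + ‖u‖) by ring,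
            Real.mul_rpow ht.le (by positivity),
            ENNReal.ofReal_mul (Real.rpow_nonneg ht.le _)]
      _ = ∫⁻ z : EuclideanSpace ℝ (Fin N), ENNReal.ofReal ((t + ‖z‖) ^ (-α))
            ∂(Measure.map (fun u : EuclideanSpace ℝ (Fin N) => t • u) volume) :=
          (lintegral_map hg (measurable_const_smul t)).symm
      _ = ENNReal.ofReal |((t ^ N : ℝ))⁻¹| *
            ∫⁻ z : EuclideanSpace ℝ (Fin N), ENNReal.ofReal ((t + ‖z‖) ^ (-α)) := by
          rw [hmap, lintegral_smul_measure, finrank_euclideanSpace_fin, smul_eq_mul]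
  rw [lintegral_const_mul' _ _ ENNReal.ofReal_ne_top] at key
  have hcan : ENNReal.ofReal ((t ^ N : ℝ)) * ENNReal.ofReal |((t ^ N : ℝ))⁻¹| = 1 := by
    rw [← ENNReal.ofReal_mul (pow_nonneg ht.le N), abs_of_pos (inv_pos.2 (pow_pos ht N)),
      mul_inv_cancel₀ (pow_pos ht N).ne', ENNReal.ofReal_one]
  calc ∫⁻ z : EuclideanSpace ℝ (Fin N), ENNReal.ofReal ((t + ‖z‖) ^ (-α))
      = (ENNReal.ofReal ((t ^ N : ℝ)) * ENNReal.ofReal |((t ^ N : ℝ))⁻¹|) *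
          ∫⁻ z : EuclideanSpace ℝ (Fin N), ENNReal.ofReal ((t + ‖z‖) ^ (-α)) := by
        rw [hcan, one_mul]
    _ = ENNReal.ofReal ((t ^ N : ℝ)) * (ENNReal.ofReal (t ^ (-α)) *
          ∫⁻ u : EuclideanSpace ℝ (Fin N), ENNReal.ofReal ((1 + ‖u‖) ^ (-α))) := by
        rw [mul_assoc, ← key]
    _ = ENNReal.ofReal ((t ^ N : ℝ) * t ^ (-α)) *
          ∫⁻ u : EuclideanSpace ℝ (Fin N), ENNReal.ofReal ((1 + ‖u‖) ^ (-α)) := by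
        rw [← mul_assoc, ← ENNReal.ofReal_mul (pow_nonneg ht.le N)]
    _ = ENNReal.ofReal (t ^ ((N : ℝ) - α)) *
          ∫⁻ u : EuclideanSpace ℝ (Fin N), ENNReal.ofReal ((1 + ‖u‖) ^ (-α)) := by
        rw [show (N : ℝ) - α = (N : ℝ) + (-α) by ring, ← Real.rpow_natCast t N,
          ← Real.rpow_add ht]

open Metric Set Module in
private lemma aux_ball (N : ℕ) (β ρ : ℝ) (hρ : 0 < ρ) :
    ∫⁻ z in Metric.closedBall (0 : EuclideanSpace ℝ (Fin N)) ρ, ENNReal.ofReal (‖z‖ ^ (-β)) =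
      ENNReal.ofReal (ρ ^ ((N : ℝ) - β)) *
        ∫⁻ z in Metric.closedBall (0 : EuclideanSpace ℝ (Fin N)) 1,
          ENNReal.ofReal (‖z‖ ^ (-β)) := by
  have hg : Measurable fun z : EuclideanSpace ℝ (Fin N) =>
      ENNReal.ofReal (‖z‖ ^ (-β)) := by fun_prop
  have hmap := Measure.map_addHaar_smul (volume : Measure (EuclideanSpace ℝ (Fin N))) hρ.ne'
  have hpre : (fun u : EuclideanSpace ℝ (Fin N) => ρ • u) ⁻¹'
      Metric.closedBall (0 : EuclideanSpace ℝ (Fin N)) ρ =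
      Metric.closedBall (0 : EuclideanSpace ℝ (Fin N)) 1 := by
    ext u
    simp only [Set.mem_preimage, Metric.mem_closedBall, dist_zero_right, norm_smul,
      Real.norm_eq_abs, abs_of_pos hρ]
    exact mul_le_iff_le_one_right hρ
  have key : ∫⁻ u in Metric.closedBall (0 : EuclideanSpace ℝ (Fin N)) 1,
      ENNReal.ofReal (ρ ^ (-β)) * ENNReal.ofReal (‖u‖ ^ (-β)) =
      ENNReal.ofReal |((ρ ^ N : ℝ))⁻¹| *
        ∫⁻ z in Metric.closedBall (0 : EuclideanSpace ℝ (Fin N)) ρ,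
          ENNReal.ofReal (‖z‖ ^ (-β)) := by
    calc ∫⁻ u in Metric.closedBall (0 : EuclideanSpace ℝ (Fin N)) 1,
          ENNReal.ofReal (ρ ^ (-β)) * ENNReal.ofReal (‖u‖ ^ (-β))
        = ∫⁻ u in Metric.closedBall (0 : EuclideanSpace ℝ (Fin N)) 1,
            ENNReal.ofReal (‖ρ • u‖ ^ (-β)) := by
          refine lintegral_congr fun u => ?_
          rw [norm_smul, Real.norm_eq_abs, abs_of_pos hρ,
            Real.mul_rpow hρ.le (norm_nonneg u),
            ENNReal.ofReal_mul (Real.rpow_nonneg hρ.le _)]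
      _ = ∫⁻ z in Metric.closedBall (0 : EuclideanSpace ℝ (Fin N)) ρ,
            ENNReal.ofReal (‖z‖ ^ (-β))
            ∂(Measure.map (fun u : EuclideanSpace ℝ (Fin N) => ρ • u) volume) := by
          rw [setLIntegral_map measurableSet_closedBall hg (measurable_const_smul ρ), hpre]
      _ = ENNReal.ofReal |((ρ ^ N : ℝ))⁻¹| *
            ∫⁻ z in Metric.closedBall (0 : EuclideanSpace ℝ (Fin N)) ρ,
              ENNReal.ofReal (‖z‖ ^ (-β)) := by
          rw [hmap, finrank_euclideanSpace_fin, Measure.restrict_smul, lintegral_smul_measure, smul_eq_mul]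
  rw [lintegral_const_mul' _ _ ENNReal.ofReal_ne_top] at key
  have hcan : ENNReal.ofReal ((ρ ^ N : ℝ)) * ENNReal.ofReal |((ρ ^ N : ℝ))⁻¹| = 1 := by
    rw [← ENNReal.ofReal_mul (pow_nonneg hρ.le N), abs_of_pos (inv_pos.2 (pow_pos hρ N)),
      mul_inv_cancel₀ (pow_pos hρ N).ne', ENNReal.ofReal_one]
  calc ∫⁻ z in Metric.closedBall (0 : EuclideanSpace ℝ (Fin N)) ρ, ENNReal.ofReal (‖z‖ ^ (-β))
      = (ENNReal.ofReal ((ρ ^ N : ℝ)) * ENNReal.ofReal |((ρ ^ N : ℝ))⁻¹|) *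
          ∫⁻ z in Metric.closedBall (0 : EuclideanSpace ℝ (Fin N)) ρ,
            ENNReal.ofReal (‖z‖ ^ (-β)) := by rw [hcan, one_mul]
    _ = ENNReal.ofReal ((ρ ^ N : ℝ)) * (ENNReal.ofReal (ρ ^ (-β)) *
          ∫⁻ z in Metric.closedBall (0 : EuclideanSpace ℝ (Fin N)) 1,
            ENNReal.ofReal (‖z‖ ^ (-β))) := by rw [mul_assoc, ← key]
    _ = ENNReal.ofReal ((ρ ^ N : ℝ) * ρ ^ (-β)) *
          ∫⁻ z in Metric.closedBall (0 : EuclideanSpace ℝ (Fin N)) 1,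
            ENNReal.ofReal (‖z‖ ^ (-β)) := by
        rw [← mul_assoc, ← ENNReal.ofReal_mul (pow_nonneg hρ.le N)]
    _ = ENNReal.ofReal (ρ ^ ((N : ℝ) - β)) *
          ∫⁻ z in Metric.closedBall (0 : EuclideanSpace ℝ (Fin N)) 1,
            ENNReal.ofReal (‖z‖ ^ (-β)) := by
        rw [show (N : ℝ) - β = (N : ℝ) + (-β) by ring, ← Real.rpow_natCast ρ N,
          ← Real.rpow_add hρ]

open Metric Set Module in
private lemma aux_K (N : ℕ) (β : ℝ) (hβ0 : 0 < β) (hβ : β < N) :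
    ∫⁻ z in Metric.closedBall (0 : EuclideanSpace ℝ (Fin N)) 1,
      ENNReal.ofReal (‖z‖ ^ (-β)) < ⊤ := by
  set B := Metric.closedBall (0 : EuclideanSpace ℝ (Fin N)) 1 with hBdef
  have hmeas : Measurable fun z : EuclideanSpace ℝ (Fin N) => ‖z‖ ^ (-β) := by fun_prop
  rw [lintegral_eq_lintegral_meas_le (volume.restrict B)
    (Filter.Eventually.of_forall fun z => Real.rpow_nonneg (norm_nonneg _) _)
    hmeas.aemeasurable]
  have hsub : ∀ s : ℝ, 0 < s →
      {a : EuclideanSpace ℝ (Fin N) | s ≤ ‖a‖ ^ (-β)} ⊆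
        Metric.closedBall 0 (s ^ (-β⁻¹)) := by
    intro s hs a ha
    simp only [Set.mem_setOf_eq] at ha
    have hna : 0 < ‖a‖ := by
      rcases (norm_nonneg a).lt_or_eq with h | h
      · exact h
      · rw [← h, Real.zero_rpow (by simpa using hβ0.ne' : -β ≠ 0)] at ha; linarith
    have h2 := Real.rpow_le_rpow_of_nonpos hs ha
      (by simpa using (inv_pos.2 hβ0).le : -β⁻¹ ≤ 0)
    have h3 : (‖a‖ ^ (-β)) ^ (-β⁻¹) = ‖a‖ := by
      rw [← Real.rpow_mul (norm_nonneg a), neg_mul_neg, mul_inv_cancel₀ hβ0.ne', Real.rpow_one]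
    rw [h3] at h2
    exact mem_closedBall_zero_iff.mpr h2
  calc ∫⁻ s in Set.Ioi (0 : ℝ),
        (volume.restrict B) {a : EuclideanSpace ℝ (Fin N) | s ≤ ‖a‖ ^ (-β)}
      ≤ ∫⁻ s in Set.Ioc (0 : ℝ) 1 ∪ Set.Ioi 1,
          (volume.restrict B) {a : EuclideanSpace ℝ (Fin N) | s ≤ ‖a‖ ^ (-β)} :=
        lintegral_mono_set Set.Ioi_subset_Ioc_union_Ioi
    _ ≤ (∫⁻ s in Set.Ioc (0 : ℝ) 1,
          (volume.restrict B) {a : EuclideanSpace ℝ (Fin N) | s ≤ ‖a‖ ^ (-β)}) +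
        ∫⁻ s in Set.Ioi (1 : ℝ),
          (volume.restrict B) {a : EuclideanSpace ℝ (Fin N) | s ≤ ‖a‖ ^ (-β)} :=
        lintegral_union_le _ _ _
    _ < ⊤ := by
        refine ENNReal.add_lt_top.2 ⟨?_, ?_⟩
        · calc ∫⁻ s in Set.Ioc (0 : ℝ) 1,
                (volume.restrict B) {a : EuclideanSpace ℝ (Fin N) | s ≤ ‖a‖ ^ (-β)}
              ≤ ∫⁻ _ in Set.Ioc (0 : ℝ) 1, volume B := by
                refine lintegral_mono fun s => ?_
                calc (volume.restrict B) {a : EuclideanSpace ℝ (Fin N) | s ≤ ‖a‖ ^ (-β)}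
                    ≤ (volume.restrict B) Set.univ := measure_mono (Set.subset_univ _)
                  _ = volume B := by rw [Measure.restrict_apply_univ]
            _ = volume B * volume (Set.Ioc (0 : ℝ) 1) := setLIntegral_const _ _
            _ < ⊤ := ENNReal.mul_lt_top measure_closedBall_lt_top
                (by simp [Real.volume_Ioc])
        · have hexp : -β⁻¹ * (N : ℕ) < -1 := by
            have h1 : (1 : ℝ) < (N : ℝ) / β := (one_lt_div hβ0).2 hβ
            have : -β⁻¹ * ((N : ℕ) : ℝ) = -((N : ℝ) / β) := by ring
            rw [this]
            linarith
          calc ∫⁻ s in Set.Ioi (1 : ℝ),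
                (volume.restrict B) {a : EuclideanSpace ℝ (Fin N) | s ≤ ‖a‖ ^ (-β)}
              ≤ ∫⁻ s in Set.Ioi (1 : ℝ), ENNReal.ofReal (s ^ (-β⁻¹ * (N : ℕ))) *
                  volume (Metric.ball (0 : EuclideanSpace ℝ (Fin N)) 1) := by
                refine setLIntegral_mono (by fun_prop) fun s hs => ?_
                have hs1 : (1 : ℝ) < s := hs
                have h1 : (volume.restrict B)
                    {a : EuclideanSpace ℝ (Fin N) | s ≤ ‖a‖ ^ (-β)} ≤
                    volume (Metric.closedBall (0 : EuclideanSpace ℝ (Fin N)) (s ^ (-β⁻¹))) := by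
                  refine le_trans (Measure.restrict_le_self _) (measure_mono (hsub s (by linarith)))
                refine h1.trans (le_of_eq ?_)
                rw [Measure.addHaar_closedBall _ _ (Real.rpow_nonneg (by linarith) _),
                  finrank_euclideanSpace_fin, ← Real.rpow_natCast (s ^ (-β⁻¹)) N,
                  ← Real.rpow_mul (by linarith : (0:ℝ) ≤ s)]
              _ = (∫⁻ s in Set.Ioi (1 : ℝ), ENNReal.ofReal (s ^ (-β⁻¹ * (N : ℕ)))) *
                  volume (Metric.ball (0 : EuclideanSpace ℝ (Fin N)) 1) :=
                lintegral_mul_const' _ _ measure_ball_lt_top.ne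
              _ < ⊤ := ENNReal.mul_lt_top
                  ((integrableOn_Ioi_rpow_of_lt hexp one_pos).setLIntegral_lt_top)
                  measure_ball_lt_top

set_option maxHeartbeats 2000000 in
/-- For `N ≥ 1`, `δ > 0`, `α > N` and `0 < β < N`, there is `C > 0`
such that for all `x, y ∈ ℝ^N` and `t > 0` with `|y−x|² + t² ≥ δ²`,
`∫_{ℝ^N} (t+|z|)^{−α} |y−z−x|^{−β} dz ≤ C ((1+|y−x|)^{−β} t^{−(α−N)} + (1+|y−x|)^{−(α+β−N)})`. -/
theorem stmt_8 (N : ℕ) (hN : 1 ≤ N) (δ α β : ℝ) (hδ : 0 < δ)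
    (hα : (N : ℝ) < α) (hβ0 : 0 < β) (hβ : β < N) :
    ∃ C > 0, ∀ (x y : EuclideanSpace ℝ (Fin N)) (t : ℝ), 0 < t →
      δ ^ 2 ≤ ‖y - x‖ ^ 2 + t ^ 2 →
      (∫ z : EuclideanSpace ℝ (Fin N), (t + ‖z‖) ^ (-α) * ‖y - z - x‖ ^ (-β)) ≤
        C * ((1 + ‖y - x‖) ^ (-β) * t ^ (-(α - N)) +
          (1 + ‖y - x‖) ^ (-(α + β - N))) := by
  have hJ : (∫⁻ u : EuclideanSpace ℝ (Fin N), ENNReal.ofReal ((1 + ‖u‖) ^ (-α))) < ⊤ := by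
    apply finite_integral_one_add_norm
    rwa [finrank_euclideanSpace_fin]
  have hK : (∫⁻ z in Metric.closedBall (0 : EuclideanSpace ℝ (Fin N)) 1,
      ENNReal.ofReal (‖z‖ ^ (-β))) < ⊤ := aux_K N β hβ0 hβ
  set cJ : ℝ := (∫⁻ u : EuclideanSpace ℝ (Fin N),
    ENNReal.ofReal ((1 + ‖u‖) ^ (-α))).toReal with hcJdef
  set cK : ℝ := (∫⁻ z in Metric.closedBall (0 : EuclideanSpace ℝ (Fin N)) 1,
    ENNReal.ofReal (‖z‖ ^ (-β))).toReal with hcKdef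
  have hcJ0 : 0 ≤ cJ := ENNReal.toReal_nonneg
  have hcK0 : 0 ≤ cK := ENNReal.toReal_nonneg
  set c₁ : ℝ := δ / (2 * (1 + δ)) with hc₁def
  have hc₁ : 0 < c₁ := by rw [hc₁def]; positivity
  have he0 : 0 < α + β - (N : ℝ) := by linarith
  have hcKe : 0 ≤ c₁ ^ (-(α + β - (N : ℝ))) * cK :=
    mul_nonneg (Real.rpow_nonneg hc₁.le _) hcK0
  have hcJe : 0 ≤ c₁ ^ (-β) * cJ := mul_nonneg (Real.rpow_nonneg hc₁.le _) hcJ0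
  refine ⟨c₁ ^ (-(α + β - (N : ℝ))) * cK + c₁ ^ (-β) * cJ + 1, by linarith, ?_⟩
  intro x y t ht hcond
  have hw : ∀ z : EuclideanSpace ℝ (Fin N), y - z - x = (y - x) - z :=
    fun z => sub_right_comm y z x
  simp only [hw]
  set C : ℝ := c₁ ^ (-(α + β - (N : ℝ))) * cK + c₁ ^ (-β) * cJ + 1 with hCdef
  set w := y - x with hwdef
  set r := ‖w‖ with hrdef
  have hr0 : 0 ≤ r := norm_nonneg w
  have h1r : 0 < 1 + r := by linarith
  have hsq : δ ^ 2 ≤ (t + r) ^ 2 := by nlinarith [mul_nonneg ht.le hr0]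
  have hδt : δ ≤ t + r := le_of_pow_le_pow_left₀ two_ne_zero (by linarith) hsq
  set ρ : ℝ := (t + r) / 2 with hρdef
  have hρ : 0 < ρ := by rw [hρdef]; linarith
  -- rewrite the t-exponent
  rw [show -(α - (N : ℝ)) = (N : ℝ) - α by ring]
  have hfm : Measurable fun z : EuclideanSpace ℝ (Fin N) =>
      (t + ‖z‖) ^ (-α) * ‖w - z‖ ^ (-β) := by fun_prop
  rw [integral_eq_lintegral_of_nonneg_ae
    (Filter.Eventually.of_forall fun z =>
      mul_nonneg (Real.rpow_nonneg (add_nonneg ht.le (norm_nonneg z)) _)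
        (Real.rpow_nonneg (norm_nonneg _) _))
    hfm.aestronglyMeasurable]
  -- nonnegativity of the target
  have hP0 : 0 ≤ (1 + r) ^ (-β) * t ^ ((N : ℝ) - α) :=
    mul_nonneg (Real.rpow_nonneg h1r.le _) (Real.rpow_nonneg ht.le _)
  have hQ0 : 0 ≤ (1 + r) ^ (-(α + β - (N : ℝ))) := Real.rpow_nonneg h1r.le _
  have hC0 : 0 < C := by rw [hCdef]; linarith
  apply ENNReal.toReal_le_of_le_ofReal
    (mul_nonneg hC0.le (add_nonneg hP0 hQ0))
  -- split the integral
  set S := Metric.closedBall w ρ with hSdef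
  have hSm : MeasurableSet S := measurableSet_closedBall
  rw [← lintegral_add_compl
    (fun z : EuclideanSpace ℝ (Fin N) =>
      ENNReal.ofReal ((t + ‖z‖) ^ (-α) * ‖w - z‖ ^ (-β))) hSm]
  -- translate the ball integral
  have htrans : ∫⁻ z in S, ENNReal.ofReal (‖w - z‖ ^ (-β)) =
      ∫⁻ u in Metric.closedBall (0 : EuclideanSpace ℝ (Fin N)) ρ,
        ENNReal.ofReal (‖u‖ ^ (-β)) := by
    have hmap : Measure.map (fun u : EuclideanSpace ℝ (Fin N) => u + w) volume = volume :=
      map_add_right_eq_self volume w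
    have h1 : Measurable fun z : EuclideanSpace ℝ (Fin N) =>
        ENNReal.ofReal (‖w - z‖ ^ (-β)) := by fun_prop
    rw [hSdef]
    conv_lhs => rw [← hmap]
    rw [setLIntegral_map measurableSet_closedBall h1 (measurable_add_const w)]
    have hpre : (fun u : EuclideanSpace ℝ (Fin N) => u + w) ⁻¹' Metric.closedBall w ρ =
        Metric.closedBall 0 ρ := by
      ext u
      simp [Metric.mem_closedBall, dist_eq_norm, add_sub_cancel_right]
    rw [hpre]
    refine lintegral_congr fun u => ?_
    rw [show w - (u + w) = -u by abel, norm_neg]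
  have h_ball : ∫⁻ z in S, ENNReal.ofReal ((t + ‖z‖) ^ (-α) * ‖w - z‖ ^ (-β)) ≤
      ENNReal.ofReal (ρ ^ (-(α + β - (N : ℝ))) * cK) := by
    calc ∫⁻ z in S, ENNReal.ofReal ((t + ‖z‖) ^ (-α) * ‖w - z‖ ^ (-β))
        ≤ ∫⁻ z in S, ENNReal.ofReal (ρ ^ (-α)) * ENNReal.ofReal (‖w - z‖ ^ (-β)) := by
          refine setLIntegral_mono (by fun_prop) fun z hz => ?_
          rw [← ENNReal.ofReal_mul (Real.rpow_nonneg hρ.le _)]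
          refine ENNReal.ofReal_le_ofReal
            (mul_le_mul_of_nonneg_right ?_ (Real.rpow_nonneg (norm_nonneg _) _))
          refine Real.rpow_le_rpow_of_nonpos hρ ?_
            (neg_nonpos.2 (le_trans (Nat.cast_nonneg N) hα.le))
          have h1 : ‖w - z‖ ≤ ρ := by
            rw [norm_sub_rev]; exact mem_closedBall_iff_norm.mp hz
          have h2 : r - ‖w - z‖ ≤ ‖z‖ := by linarith [norm_sub_norm_le w z]
          linarith [hρdef]
      _ = ENNReal.ofReal (ρ ^ (-α)) * ∫⁻ z in S, ENNReal.ofReal (‖w - z‖ ^ (-β)) :=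
          lintegral_const_mul' _ _ ENNReal.ofReal_ne_top
      _ = ENNReal.ofReal (ρ ^ (-α)) * (ENNReal.ofReal (ρ ^ ((N : ℝ) - β)) *
            ∫⁻ z in Metric.closedBall (0 : EuclideanSpace ℝ (Fin N)) 1,
              ENNReal.ofReal (‖z‖ ^ (-β))) := by
          rw [htrans, aux_ball N β ρ hρ]
      _ = ENNReal.ofReal (ρ ^ (-(α + β - (N : ℝ))) * cK) := by
          rw [← ENNReal.ofReal_toReal hK.ne, ← hcKdef,
            ← ENNReal.ofReal_mul (Real.rpow_nonneg hρ.le _),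
            ← ENNReal.ofReal_mul (Real.rpow_nonneg hρ.le _),
            ← mul_assoc, ← Real.rpow_add hρ,
            show -α + ((N : ℝ) - β) = -(α + β - (N : ℝ)) by ring]
  have h_compl : ∫⁻ z in Sᶜ, ENNReal.ofReal ((t + ‖z‖) ^ (-α) * ‖w - z‖ ^ (-β)) ≤
      ENNReal.ofReal (ρ ^ (-β) * (t ^ ((N : ℝ) - α) * cJ)) := by
    calc ∫⁻ z in Sᶜ, ENNReal.ofReal ((t + ‖z‖) ^ (-α) * ‖w - z‖ ^ (-β))
        ≤ ∫⁻ z in Sᶜ, ENNReal.ofReal (ρ ^ (-β)) * ENNReal.ofReal ((t + ‖z‖) ^ (-α)) := by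
          refine setLIntegral_mono (by fun_prop) fun z hz => ?_
          rw [← ENNReal.ofReal_mul (Real.rpow_nonneg hρ.le _)]
          refine ENNReal.ofReal_le_ofReal ?_
          have hz' : ρ ≤ ‖w - z‖ := by
            have hzz : ¬ dist z w ≤ ρ := by
              simpa [hSdef, Metric.mem_closedBall] using hz
            rw [norm_sub_rev, ← dist_eq_norm]
            linarith [not_le.mp hzz]
          calc (t + ‖z‖) ^ (-α) * ‖w - z‖ ^ (-β)
              ≤ (t + ‖z‖) ^ (-α) * ρ ^ (-β) :=
                mul_le_mul_of_nonneg_left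
                  (Real.rpow_le_rpow_of_nonpos hρ hz' (neg_nonpos.2 hβ0.le))
                  (Real.rpow_nonneg (add_nonneg ht.le (norm_nonneg z)) _)
            _ = ρ ^ (-β) * (t + ‖z‖) ^ (-α) := mul_comm _ _
      _ ≤ ∫⁻ z : EuclideanSpace ℝ (Fin N),
            ENNReal.ofReal (ρ ^ (-β)) * ENNReal.ofReal ((t + ‖z‖) ^ (-α)) :=
          setLIntegral_le_lintegral _ _
      _ = ENNReal.ofReal (ρ ^ (-β)) *
            ∫⁻ z : EuclideanSpace ℝ (Fin N), ENNReal.ofReal ((t + ‖z‖) ^ (-α)) :=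
          lintegral_const_mul' _ _ ENNReal.ofReal_ne_top
      _ = ENNReal.ofReal (ρ ^ (-β)) * (ENNReal.ofReal (t ^ ((N : ℝ) - α)) *
            ∫⁻ u : EuclideanSpace ℝ (Fin N), ENNReal.ofReal ((1 + ‖u‖) ^ (-α))) := by
          rw [aux_whole N α t ht]
      _ = ENNReal.ofReal (ρ ^ (-β) * (t ^ ((N : ℝ) - α) * cJ)) := by
          rw [← ENNReal.ofReal_toReal hJ.ne, ← hcJdef,
            ← ENNReal.ofReal_mul (Real.rpow_nonneg ht.le _),
            ← ENNReal.ofReal_mul (Real.rpow_nonneg hρ.le _)]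
  -- the real-number estimate
  have key : δ * (1 + r) ≤ (1 + δ) * (t + r) := by nlinarith [mul_nonneg hδ.le ht.le]
  have h2 : c₁ * (1 + r) ≤ ρ := by
    rw [hc₁def, hρdef, div_mul_eq_mul_div, div_le_div_iff₀ (by positivity) two_pos]
    linarith [key]
  have hA : ρ ^ (-β) ≤ c₁ ^ (-β) * (1 + r) ^ (-β) := by
    have h := Real.rpow_le_rpow_of_nonpos (mul_pos hc₁ h1r) h2 (neg_nonpos.2 hβ0.le)
    rwa [Real.mul_rpow hc₁.le h1r.le] at h
  have hB : ρ ^ (-(α + β - (N : ℝ))) ≤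
      c₁ ^ (-(α + β - (N : ℝ))) * (1 + r) ^ (-(α + β - (N : ℝ))) := by
    have h := Real.rpow_le_rpow_of_nonpos (mul_pos hc₁ h1r) h2 (neg_nonpos.2 he0.le)
    rwa [Real.mul_rpow hc₁.le h1r.le] at h
  have hC1 : c₁ ^ (-(α + β - (N : ℝ))) * cK ≤ C := by rw [hCdef]; linarith
  have hC2 : c₁ ^ (-β) * cJ ≤ C := by rw [hCdef]; linarith
  have h₁ : ρ ^ (-(α + β - (N : ℝ))) * cK ≤ C * (1 + r) ^ (-(α + β - (N : ℝ))) := by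
    calc ρ ^ (-(α + β - (N : ℝ))) * cK
        ≤ (c₁ ^ (-(α + β - (N : ℝ))) * (1 + r) ^ (-(α + β - (N : ℝ)))) * cK :=
          mul_le_mul_of_nonneg_right hB hcK0
      _ = (c₁ ^ (-(α + β - (N : ℝ))) * cK) * (1 + r) ^ (-(α + β - (N : ℝ))) := by ring
      _ ≤ C * (1 + r) ^ (-(α + β - (N : ℝ))) := mul_le_mul_of_nonneg_right hC1 hQ0
  have h₂ : ρ ^ (-β) * (t ^ ((N : ℝ) - α) * cJ) ≤
      C * ((1 + r) ^ (-β) * t ^ ((N : ℝ) - α)) := by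
    calc ρ ^ (-β) * (t ^ ((N : ℝ) - α) * cJ)
        ≤ (c₁ ^ (-β) * (1 + r) ^ (-β)) * (t ^ ((N : ℝ) - α) * cJ) :=
          mul_le_mul_of_nonneg_right hA
            (mul_nonneg (Real.rpow_nonneg ht.le _) hcJ0)
      _ = (c₁ ^ (-β) * cJ) * ((1 + r) ^ (-β) * t ^ ((N : ℝ) - α)) := by ring
      _ ≤ C * ((1 + r) ^ (-β) * t ^ ((N : ℝ) - α)) := mul_le_mul_of_nonneg_right hC2 hP0
  calc (∫⁻ z in S, ENNReal.ofReal ((t + ‖z‖) ^ (-α) * ‖w - z‖ ^ (-β))) +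
        ∫⁻ z in Sᶜ, ENNReal.ofReal ((t + ‖z‖) ^ (-α) * ‖w - z‖ ^ (-β))
      ≤ ENNReal.ofReal (ρ ^ (-(α + β - (N : ℝ))) * cK) +
        ENNReal.ofReal (ρ ^ (-β) * (t ^ ((N : ℝ) - α) * cJ)) := add_le_add h_ball h_compl
    _ = ENNReal.ofReal (ρ ^ (-(α + β - (N : ℝ))) * cK +
          ρ ^ (-β) * (t ^ ((N : ℝ) - α) * cJ)) :=
        (ENNReal.ofReal_add (mul_nonneg (Real.rpow_nonneg hρ.le _) hcK0)
          (mul_nonneg (Real.rpow_nonneg hρ.le _)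
            (mul_nonneg (Real.rpow_nonneg ht.le _) hcJ0))).symm
    _ ≤ ENNReal.ofReal (C * ((1 + r) ^ (-β) * t ^ ((N : ℝ) - α) +
          (1 + r) ^ (-(α + β - (N : ℝ))))) := by
        refine ENNReal.ofReal_le_ofReal ?_
        nlinarith [h₁, h₂]
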